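/- Let R = ℚ[y₀, …, y_r] and S = ℚ[z₁, …, z_r], fix 1 ≤ d ≤ r and nonzero rationals m₀, m₁, …, m_d. Then there is at most one ℚ-linear map π̃ : R → S satisfying: (A) π̃(yᵢ f) = zᵢ π̃(f) for i > d; (B) π̃(yᵢ f) = (mᵢ/mⱼ) π̃(yⱼ f) + (zᵢ − (mᵢ/mⱼ) zⱼ) π̃(f) for 1 ≤ i, j ≤ d; (C) π̃(y₀ f) = −(m₀/mⱼ) π̃(yⱼ f) + (m₀/mⱼ) zⱼ π̃(f) for 1 ≤ j ≤ d; (D) π̃(y₁ ⋯ y_d f) = 0; (E) π̃(g(y₁,…,y_r)) = g(z₁,…,z_r) for every polynomial g of degree at most d−1 not involving y₀. -/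

import Mathlib

open MvPolynomial

private lemma X_mul_monomial' {n : ℕ} (j : Fin n) (σ : Fin n →₀ ℕ) :
    (X j : MvPolynomial (Fin n) ℚ) * monomial σ 1 = monomial (Finsupp.single j 1 + σ) 1 := by
  rw [monomial_single_add, pow_one]

private lemma prod_X_mul_monomial {r : ℕ} (T : Finset (Fin r)) (τ : Fin (r+1) →₀ ℕ) :
    (∏ i ∈ T, (X i.succ : MvPolynomial (Fin (r+1)) ℚ)) * monomial τ 1
      = monomial ((∑ i ∈ T, Finsupp.single i.succ 1) + τ) 1 := by
  classical
  induction T using Finset.induction_on with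
  | empty => simp
  | insert a s h ih =>
      rw [Finset.prod_insert h, Finset.sum_insert h, mul_assoc, ih, X_mul_monomial', add_assoc]

private lemma weight_single_add {n : ℕ} (j : Fin n) (σ : Fin n →₀ ℕ) :
    ∑ i, ((Finsupp.single j 1 + σ) : Fin n →₀ ℕ) i = 1 + ∑ i, σ i := by
  simp [Finsupp.add_apply, Finset.sum_add_distrib, Finsupp.single_apply]


/-- Conditions (A)–(E) for the map `π̃ : ℚ[y₀,…,y_r] → ℚ[z₁,…,z_r]` of
Pommersheim's stellar subdivision formula.  Variables `y₀,…,y_r` are indexed by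
`Fin (r+1)` (with `yᵢ = X i`), variables `z₁,…,z_r` by `Fin r` (with
`z_{i+1} = X i`, so `z` and `y` indices are related by `Fin.succ`).
The constants `m₀, …, m_d` are given by `m : ℕ → ℚ`. -/
def SatisfiesABCDE (r d : ℕ) (m : ℕ → ℚ)
    (π : MvPolynomial (Fin (r + 1)) ℚ →ₗ[ℚ] MvPolynomial (Fin r) ℚ) : Prop :=
  -- (A) π̃(yᵢ f) = zᵢ π̃(f) for i > d
  (∀ (f : MvPolynomial (Fin (r + 1)) ℚ) (i : Fin r), d < (i : ℕ) + 1 →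
    π (X i.succ * f) = X i * π f) ∧
  -- (B) π̃(yᵢ f) = (mᵢ/mⱼ) π̃(yⱼ f) + (zᵢ − (mᵢ/mⱼ) zⱼ) π̃(f) for 1 ≤ i, j ≤ d
  (∀ (f : MvPolynomial (Fin (r + 1)) ℚ) (i j : Fin r), (i : ℕ) + 1 ≤ d → (j : ℕ) + 1 ≤ d →
    π (X i.succ * f) = (m ((i : ℕ) + 1) / m ((j : ℕ) + 1)) • π (X j.succ * f)
      + (X i - C (m ((i : ℕ) + 1) / m ((j : ℕ) + 1)) * X j) * π f) ∧
  -- (C) π̃(y₀ f) = −(m₀/mⱼ) π̃(yⱼ f) + (m₀/mⱼ) zⱼ π̃(f) for 1 ≤ j ≤ d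
  (∀ (f : MvPolynomial (Fin (r + 1)) ℚ) (j : Fin r), (j : ℕ) + 1 ≤ d →
    π (X 0 * f) = -(m 0 / m ((j : ℕ) + 1)) • π (X j.succ * f)
      + (m 0 / m ((j : ℕ) + 1)) • (X j * π f)) ∧
  -- (D) π̃(y₁ ⋯ y_d f) = 0
  (∀ f : MvPolynomial (Fin (r + 1)) ℚ,
    π ((∏ i ∈ Finset.univ.filter (fun i : Fin r => (i : ℕ) + 1 ≤ d), X i.succ) * f) = 0) ∧
  -- (E) π̃(g(y₁,…,y_r)) = g(z₁,…,z_r) for deg g ≤ d − 1 (g not involving y₀)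
  (∀ g : MvPolynomial (Fin r) ℚ, g.totalDegree ≤ d - 1 → π (rename Fin.succ g) = g)

/-- There is at most one `ℚ`-linear map `π̃ : ℚ[y₀,…,y_r] → ℚ[z₁,…,z_r]`
satisfying conditions (A)–(E), for `1 ≤ d ≤ r` and nonzero `m₀, …, m_d`. -/
theorem stellar_pushforward_unique {r d : ℕ} (hd1 : 1 ≤ d) (hdr : d ≤ r)
    (m : ℕ → ℚ) (hm : ∀ i ≤ d, m i ≠ 0)
    (π₁ π₂ : MvPolynomial (Fin (r + 1)) ℚ →ₗ[ℚ] MvPolynomial (Fin r) ℚ)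
    (h₁ : SatisfiesABCDE r d m π₁) (h₂ : SatisfiesABCDE r d m π₂) :
    π₁ = π₂ := by
  classical
  obtain ⟨hA₁, hB₁, hC₁, hD₁, hE₁⟩ := h₁
  obtain ⟨hA₂, hB₂, hC₂, hD₂, hE₂⟩ := h₂
  set D := π₁ - π₂ with hDdef
  have hDapp : ∀ f, D f = π₁ f - π₂ f := fun f => rfl
  have hA : ∀ f (i : Fin r), d < (i:ℕ)+1 → D (X i.succ * f) = X i * D f := by
    intro f i hi
    rw [hDapp, hDapp, hA₁ f i hi, hA₂ f i hi, mul_sub]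
  have hB : ∀ f (i j : Fin r), (i:ℕ)+1 ≤ d → (j:ℕ)+1 ≤ d →
      D (X i.succ * f) = (m ((i:ℕ)+1) / m ((j:ℕ)+1)) • D (X j.succ * f)
        + (X i - C (m ((i:ℕ)+1) / m ((j:ℕ)+1)) * X j) * D f := by
    intro f i j hi hj
    rw [hDapp, hDapp, hDapp, hB₁ f i j hi hj, hB₂ f i j hi hj, smul_sub, mul_sub]
    ring
  have hC : ∀ f (j : Fin r), (j:ℕ)+1 ≤ d →
      D (X 0 * f) = -(m 0 / m ((j:ℕ)+1)) • D (X j.succ * f)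
        + (m 0 / m ((j:ℕ)+1)) • (X j * D f) := by
    intro f j hj
    rw [hDapp, hDapp, hDapp, hC₁ f j hj, hC₂ f j hj, smul_sub, mul_sub, smul_sub]
    ring
  have hDz : ∀ f, D ((∏ i ∈ Finset.univ.filter (fun i : Fin r => (i:ℕ)+1 ≤ d), X i.succ) * f) = 0 := by
    intro f; rw [hDapp, hD₁ f, hD₂ f, sub_self]
  have hE : ∀ g : MvPolynomial (Fin r) ℚ, g.totalDegree ≤ d - 1 → D (rename Fin.succ g) = 0 := by
    intro g hg; rw [hDapp, hE₁ g hg, hE₂ g hg, sub_self]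
  have decomp : ∀ (j : Fin (r+1)) (σ : Fin (r+1) →₀ ℕ), 1 ≤ σ j →
      Finsupp.single j 1 + (σ - Finsupp.single j 1) = σ := by
    intro j σ hj
    ext a
    simp only [Finsupp.add_apply, Finsupp.tsub_apply, Finsupp.single_apply]
    split_ifs with h
    · subst h; omega
    · omega
  set S : Finset (Fin r) := Finset.univ.filter (fun i : Fin r => (i:ℕ)+1 ≤ d) with hS
  have hmemS : ∀ l : Fin r, l ∈ S ↔ (l:ℕ)+1 ≤ d := by
    intro l; rw [hS]; simp
  have hcardS : S.card ≤ d := by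
    have h1 : S.card = (S.image (fun i : Fin r => (i : ℕ))).card :=
      (Finset.card_image_of_injective S Fin.val_injective).symm
    rw [h1]
    have hsubset : S.image (fun i : Fin r => (i:ℕ)) ⊆ Finset.range d := by
      intro x hx
      simp only [Finset.mem_image] at hx
      obtain ⟨l, hlS, rfl⟩ := hx
      exact Finset.mem_range.mpr (by have := (hmemS l).mp hlS; omega)
    exact le_trans (Finset.card_le_card hsubset) (by simp)
  -- main claim for monomials with no y₀
  have main : ∀ (n : ℕ) (σ : Fin (r+1) →₀ ℕ), σ 0 = 0 → (∑ i, σ i) = n →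
      D (monomial σ 1) = 0 := by
    intro n
    induction n using Nat.strong_induction_on with
    | _ n ihn =>
    suffices h : ∀ (k : ℕ) (σ : Fin (r+1) →₀ ℕ), σ 0 = 0 → (∑ i, σ i) = n →
        (S.filter (fun l => σ l.succ = 0)).card = k → D (monomial σ 1) = 0 by
      intro σ h0 hw; exact h _ σ h0 hw rfl
    intro k
    induction k using Nat.strong_induction_on with
    | _ k ihk =>
    intro σ h0 hw hk
    by_cases hn : n ≤ d - 1
    · -- case (E)
      have hinj : Function.Injective (Fin.succ : Fin r → Fin (r+1)) := Fin.succ_injective r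
      have hsupp : ↑σ.support ⊆ Set.range (Fin.succ : Fin r → Fin (r+1)) := by
        intro a ha
        simp only [Finset.mem_coe, Finsupp.mem_support_iff] at ha
        rcases Fin.eq_zero_or_eq_succ a with rfl | ⟨b, rfl⟩
        · exact absurd h0 ha
        · exact ⟨b, rfl⟩
      have hmap := Finsupp.mapDomain_comapDomain Fin.succ hinj σ hsupp
      set τ := Finsupp.comapDomain Fin.succ σ hinj.injOn with hτ
      have hdeg : (monomial τ (1:ℚ)).totalDegree ≤ d - 1 := by
        rw [totalDegree_monomial _ (one_ne_zero), Finsupp.sum_fintype _ _ (fun _ => rfl)]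
        have h1 : ∑ i : Fin r, τ i = ∑ i : Fin r, σ i.succ := by
          apply Finset.sum_congr rfl
          intro i _
          simp [hτ, Finsupp.comapDomain_apply]
        have hW : ∑ i, σ i = σ 0 + ∑ i : Fin r, σ i.succ := Fin.sum_univ_succ σ
        omega
      have := hE (monomial τ 1) hdeg
      rwa [rename_monomial, hmap] at this
    · by_cases hbig : ∃ i : Fin r, d < (i:ℕ)+1 ∧ σ i.succ ≠ 0
      · -- case (A)
        obtain ⟨i, hid, hine⟩ := hbig
        have h1 : 1 ≤ σ i.succ := Nat.one_le_iff_ne_zero.mpr hine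
        set σ' := σ - Finsupp.single i.succ 1 with hσ'
        have e0 : Finsupp.single i.succ 1 + σ' = σ := decomp _ _ h1
        have e1 : monomial σ (1:ℚ) = X i.succ * monomial σ' 1 := by
          rw [X_mul_monomial', e0]
        have hWs : ∑ a, σ a = 1 + ∑ a, σ' a := by
          conv_lhs => rw [← e0]
          exact weight_single_add i.succ σ'
        have hge1 : 1 ≤ ∑ a, σ a := by omega
        have h0' : σ' 0 = 0 := by
          rw [hσ']
          simp [Finsupp.tsub_apply, h0]
        rw [e1, hA (monomial σ' 1) i hid, ihn (n-1) (by omega) σ' h0' (by omega), mul_zero]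
      · push_neg at hbig
        by_cases hzero : ∃ i ∈ S, σ i.succ = 0
        · -- case (B)
          obtain ⟨i, hiS, hiz⟩ := hzero
          have hid : (i:ℕ)+1 ≤ d := (hmemS i).mp hiS
          have hnS : n = ∑ l ∈ S, σ l.succ := by
            have hW : ∑ a, σ a = σ 0 + ∑ l : Fin r, σ l.succ := Fin.sum_univ_succ σ
            have hsplit : ∑ l ∈ S, σ l.succ
                + ∑ l ∈ Finset.univ.filter (fun l : Fin r => ¬((l:ℕ)+1 ≤ d)), σ l.succ
                = ∑ l : Fin r, σ l.succ := by
              rw [hS]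
              exact Finset.sum_filter_add_sum_filter_not _ _ _
            have hz2 : ∑ l ∈ Finset.univ.filter (fun l : Fin r => ¬((l:ℕ)+1 ≤ d)), σ l.succ = 0 := by
              refine Finset.sum_eq_zero fun l hl => ?_
              refine hbig l ?_
              simp only [Finset.mem_filter, Finset.mem_univ, true_and] at hl
              omega
            omega
          have hj2 : ∃ j ∈ S, 2 ≤ σ j.succ := by
            by_contra hcon
            push_neg at hcon
            have h1 : ∑ l ∈ S.erase i, σ l.succ + σ i.succ = ∑ l ∈ S, σ l.succ :=
              Finset.sum_erase_add S _ hiS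
            have h2 : ∑ l ∈ S.erase i, σ l.succ ≤ ∑ l ∈ S.erase i, 1 :=
              Finset.sum_le_sum fun l hl => by
                have := hcon l (Finset.mem_of_mem_erase hl); omega
            have h3 : ∑ l ∈ S.erase i, (1:ℕ) = (S.erase i).card := by simp
            have h4 : (S.erase i).card = S.card - 1 := Finset.card_erase_of_mem hiS
            have h5 : 1 ≤ S.card := Finset.card_pos.mpr ⟨i, hiS⟩
            omega
          obtain ⟨j, hjS, hj2⟩ := hj2
          have hjd : (j:ℕ)+1 ≤ d := (hmemS j).mp hjS
          set σ' := σ - Finsupp.single j.succ 1 with hσ'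
          have e0 : Finsupp.single j.succ 1 + σ' = σ := decomp _ _ (by omega)
          have e1 : monomial σ (1:ℚ) = X j.succ * monomial σ' 1 := by
            rw [X_mul_monomial', e0]
          have h0' : σ' 0 = 0 := by
            rw [hσ']; simp [Finsupp.tsub_apply, h0]
          have hWs : ∑ a, σ a = 1 + ∑ a, σ' a := by
            conv_lhs => rw [← e0]
            exact weight_single_add j.succ σ'
          have hDf : D (monomial σ' 1) = 0 := ihn (n-1) (by omega) σ' h0' (by omega)
          have happ' : ∀ a, σ' a = σ a - (if j.succ = a then 1 else 0) := by
            intro a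
            rw [hσ']
            simp [Finsupp.tsub_apply, Finsupp.single_apply]
          set σ'' := Finsupp.single i.succ 1 + σ' with hσ''
          have h0'' : σ'' 0 = 0 := by
            rw [hσ'']
            simp [Finsupp.add_apply, Finsupp.single_apply, h0', (Fin.succ_ne_zero i)]
          have hW'' : ∑ a, σ'' a = n := by
            rw [hσ'', weight_single_add]; omega
          have hval : ∀ l : Fin r, σ'' l.succ
              = (if i = l then 1 else 0) + (σ l.succ - if j = l then 1 else 0) := by
            intro l
            rw [hσ'']
            simp only [Finsupp.add_apply, Finsupp.single_apply, happ' l.succ, Fin.succ_inj]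
          have hset : S.filter (fun l => σ'' l.succ = 0)
              = (S.filter (fun l => σ l.succ = 0)).erase i := by
            ext l
            simp only [Finset.mem_filter, Finset.mem_erase]
            constructor
            · rintro ⟨hlS, hl0⟩
              rw [hval l] at hl0
              have hil : ¬ (i = l) := by
                rintro rfl; rw [if_pos rfl] at hl0; omega
              rw [if_neg hil] at hl0
              have hjl : ¬ (j = l) := by
                rintro rfl; rw [if_pos rfl] at hl0; omega
              rw [if_neg hjl] at hl0
              exact ⟨fun h => hil h.symm, hlS, by omega⟩
            · rintro ⟨hli, hlS, hl0⟩
              refine ⟨hlS, ?_⟩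
              rw [hval l, if_neg (fun h => hli h.symm)]
              have hjl : ¬ (j = l) := by rintro rfl; omega
              rw [if_neg hjl]
              omega
          have hiz' : i ∈ S.filter (fun l => σ l.succ = 0) := Finset.mem_filter.mpr ⟨hiS, hiz⟩
          have hk1 : 1 ≤ (S.filter (fun l => σ l.succ = 0)).card :=
            Finset.card_pos.mpr ⟨i, hiz'⟩
          have hZ'' : (S.filter (fun l => σ'' l.succ = 0)).card < k := by
            rw [hset, Finset.card_erase_of_mem hiz']
            omega
          have hDσ'' : D (monomial σ'' 1) = 0 := ihk _ hZ'' σ'' h0'' hW'' rfl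
          have e2 : (X i.succ : MvPolynomial (Fin (r+1)) ℚ) * monomial σ' 1 = monomial σ'' 1 := by
            rw [X_mul_monomial', hσ'']
          rw [e1, hB (monomial σ' 1) j i hjd hid, e2, hDσ'', hDf]
          simp
        · -- case (D)
          push_neg at hzero
          have hs : ∀ a, ((∑ i ∈ S, Finsupp.single i.succ 1 : Fin (r+1) →₀ ℕ)) a ≤ σ a := by
            intro a
            rw [Finsupp.finset_sum_apply]
            by_cases hmem : ∃ i ∈ S, i.succ = a
            · obtain ⟨i, hiS, hia⟩ := hmem
              have hsum : ∑ l ∈ S, (Finsupp.single l.succ (1:ℕ)) a = 1 := by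
                rw [Finset.sum_eq_single i]
                · simp [← hia, Finsupp.single_apply]
                · intro b hb hbi
                  have hne : b.succ ≠ a := fun h =>
                    hbi (Fin.succ_injective r (h.trans hia.symm))
                  simp [Finsupp.single_apply, hne]
                · intro h; exact absurd hiS h
              rw [hsum]
              have := hzero i hiS
              rw [← hia]
              omega
            · have hz : ∀ i ∈ S, (Finsupp.single i.succ (1:ℕ)) a = 0 := by
                intro i hi
                have : i.succ ≠ a := fun h => hmem ⟨i, hi, h⟩
                simp [Finsupp.single_apply, this]
              rw [Finset.sum_congr rfl hz]
              simp
          have hle : (∑ i ∈ S, Finsupp.single i.succ 1 : Fin (r+1) →₀ ℕ) ≤ σ :=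
            Finsupp.le_def.mpr hs
          have e0 : (∑ i ∈ S, Finsupp.single i.succ 1 : Fin (r+1) →₀ ℕ)
              + (σ - ∑ i ∈ S, Finsupp.single i.succ 1) = σ := add_tsub_cancel_of_le hle
          have e1 : monomial σ (1:ℚ)
              = (∏ i ∈ S, X i.succ) * monomial (σ - ∑ i ∈ S, Finsupp.single i.succ 1) 1 := by
            rw [prod_X_mul_monomial, e0]
          rw [e1]
          exact hDz _
  -- remove powers of y₀ via (C)
  have claim2 : ∀ (a : ℕ) (σ : Fin (r+1) →₀ ℕ), σ 0 ≤ a → D (monomial σ 1) = 0 := by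
    intro a
    induction a with
    | zero => intro σ h0; exact main (∑ i, σ i) σ (Nat.le_zero.mp h0) rfl
    | succ a ih =>
        intro σ h0
        by_cases hle : σ 0 ≤ a
        · exact ih σ hle
        · have h01 : 1 ≤ σ 0 := by omega
          set σ' := σ - Finsupp.single 0 1 with hσ'
          have e0 : Finsupp.single 0 1 + σ' = σ := decomp 0 σ h01
          have e1 : monomial σ (1:ℚ) = X 0 * monomial σ' 1 := by
            rw [X_mul_monomial', e0]
          have hσ'0 : σ' 0 ≤ a := by
            have hh : σ' 0 = σ 0 - 1 := by
              rw [hσ']; simp [Finsupp.tsub_apply, Finsupp.single_apply]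
            omega
          have hr0 : 0 < r := lt_of_lt_of_le hd1 hdr
          set j : Fin r := ⟨0, hr0⟩ with hj
          have hjd : (j:ℕ) + 1 ≤ d := by simpa [hj] using hd1
          have h2 : ((Finsupp.single j.succ 1 + σ') : Fin (r+1) →₀ ℕ) 0 ≤ a := by
            have : ((Finsupp.single j.succ 1 + σ') : Fin (r+1) →₀ ℕ) 0 = σ' 0 := by
              simp [Finsupp.add_apply, Finsupp.single_apply, (Fin.succ_ne_zero j)]
            omega
          rw [e1, hC (monomial σ' 1) j hjd, X_mul_monomial', ih _ h2, ih σ' hσ'0]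
          simp
  have key : ∀ σ : Fin (r+1) →₀ ℕ, D (monomial σ 1) = 0 := fun σ => claim2 (σ 0) σ le_rfl
  have hall : ∀ f, D f = 0 := by
    intro f
    rw [f.as_sum, map_sum]
    refine Finset.sum_eq_zero fun v _ => ?_
    have hmono : monomial v (coeff v f) = (coeff v f) • monomial v (1:ℚ) := by
      rw [smul_monomial, smul_eq_mul, mul_one]
    rw [hmono, map_smul, key v, smul_zero]
  apply LinearMap.ext
  intro f
  have := hall f
  rw [hDapp] at this
  exact sub_eq_zero.mp this
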